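/- arXiv:2005.03991 — 3 statements merged into one kernel-verified Lean document; each statement's English description precedes it below -/
import Mathlib

section
/- Let J ∈ ℝ^{n×N} (N ≥ n) have singular value decomposition J = Σ_{i=1}^n σ_i w_i v_iᵀ, let r_0 ∈ ℝ^n, θ_0 ∈ ℝ^N, and define linearized gradient-descent iterates θ̃_0 = θ_0, θ̃_{t+1} = θ̃_t − η Jᵀ(r_0 + J(θ̃_t − θ_0)) with stepsize η ≤ 1/σ_1². Then for every iteration t ≥ 0, ‖θ̃_t − θ_0‖² = Σ_{i=1}^n ( ⟨w_i, r_0⟩ (1 − (1 − η σ_i²)^t)/σ_i )², where terms with σ_i = 0 are interpreted as zero. In particular ‖θ̃_t − θ_0‖ ≤ ‖J† r_0‖, where J† is the Moore–Penrose pseudo-inverse of J. -/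
noncomputable section

/-- Euclidean norm of a vector in `ℝ^n`. -/
def eNorm {n : ℕ} (x : Fin n → ℝ) : ℝ := Real.sqrt (∑ i, x i ^ 2)

/-- Euclidean inner product. -/
def dot {n : ℕ} (x y : Fin n → ℝ) : ℝ := ∑ i, x i * y i

/-- A family of vectors is orthonormal. -/
def OrthonormalFam {n : ℕ} {ι : Type*} [DecidableEq ι] (w : ι → Fin n → ℝ) : Prop :=
  ∀ i j, dot (w i) (w j) = if i = j then 1 else 0

lemma dot_coeff {n N : ℕ} {v : Fin n → Fin N → ℝ} (hv : OrthonormalFam v)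
    (a : Fin n → ℝ) (k : Fin n) :
    ∑ j, v k j * (∑ i, a i * v i j) = a k := by
  have h1 : ∀ j, v k j * (∑ i, a i * v i j) = ∑ i, a i * (v k j * v i j) := by
    intro j; rw [Finset.mul_sum]; apply Finset.sum_congr rfl; intros; ring
  simp only [h1]
  rw [Finset.sum_comm]
  have h2 : ∀ i, ∑ j, a i * (v k j * v i j) = a i * (if k = i then (1:ℝ) else 0) := by
    intro i
    rw [← Finset.mul_sum]
    congr 1
    exact hv k i
  simp only [h2]
  simp

lemma sum_sq_coeff {n N : ℕ} {v : Fin n → Fin N → ℝ} (hv : OrthonormalFam v)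
    (a : Fin n → ℝ) :
    ∑ j, (∑ i, a i * v i j) ^ 2 = ∑ i, a i ^ 2 := by
  have h1 : ∀ j, (∑ i, a i * v i j) ^ 2 = ∑ i, a i * (v i j * (∑ k, a k * v k j)) := by
    intro j; rw [sq, Finset.sum_mul]; apply Finset.sum_congr rfl; intros; ring
  simp only [h1]
  rw [Finset.sum_comm]
  apply Finset.sum_congr rfl
  intro i _
  rw [← Finset.mul_sum, dot_coeff hv a i, sq]

/-- For `J = Σᵢ σᵢ wᵢ vᵢᵀ` and linearized gradient-descent iterates
`θ̃₀ = θ₀`, `θ̃_{t+1} = θ̃_t − η Jᵀ(r₀ + J(θ̃_t − θ₀))` with stepsize `0 ≤ η ≤ 1/σ₁²`,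
one has `‖θ̃_t − θ₀‖² = Σᵢ (⟨wᵢ, r₀⟩ (1 − (1 − η σᵢ²)^t)/σᵢ)²` (terms with `σᵢ = 0`
are zero, which is Lean's convention `x / 0 = 0`), and `‖θ̃_t − θ₀‖ ≤ ‖J† r₀‖` where
`J† = Σᵢ σᵢ⁻¹ vᵢ wᵢᵀ` is the Moore–Penrose pseudo-inverse (with `0⁻¹ = 0`). -/
theorem linearized_iterate_distance {n N : ℕ} (hnN : n ≤ N) (hn : 0 < n)
    (J : Matrix (Fin n) (Fin N) ℝ)
    (w : Fin n → Fin n → ℝ) (v : Fin n → Fin N → ℝ) (σ : Fin n → ℝ)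
    (hw : OrthonormalFam w) (hv : OrthonormalFam v)
    (hσord : ∀ i j : Fin n, i ≤ j → σ j ≤ σ i) (hσnonneg : ∀ i, 0 ≤ σ i)
    (hJ : J = ∑ i, σ i • Matrix.vecMulVec (w i) (v i))
    (r0 : Fin n → ℝ) (θ0 : Fin N → ℝ) (η : ℝ)
    (hη0 : 0 ≤ η) (hη : η ≤ 1 / σ ⟨0, hn⟩ ^ 2)
    (θ : ℕ → Fin N → ℝ) (hθ0 : θ 0 = θ0)
    (hθ : ∀ t, θ (t + 1) = θ t - η • J.transpose.mulVec (r0 + J.mulVec (θ t - θ0))) :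
    ∀ t : ℕ,
      eNorm (θ t - θ0) ^ 2 =
        ∑ i, (dot (w i) r0 * (1 - (1 - η * σ i ^ 2) ^ t) / σ i) ^ 2 ∧
      eNorm (θ t - θ0) ≤
        eNorm ((∑ i, (σ i)⁻¹ • Matrix.vecMulVec (v i) (w i)).mulVec r0) := by
  set c : Fin n → ℝ := fun i => dot (w i) r0 with hc
  set p : Fin n → ℝ := fun i => 1 - η * σ i ^ 2 with hp
  set a : Fin n → ℕ → ℝ := fun i t => -(c i * (1 - p i ^ t) / σ i) with ha
  -- entries of J
  have hJent : ∀ i j, J i j = ∑ k, σ k * (w k i * v k j) := by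
    intro i j
    rw [hJ]
    simp [Matrix.sum_apply, Matrix.vecMulVec_apply]
  -- mulVec formulas
  have hJmul : ∀ (x : Fin N → ℝ) (i : Fin n),
      J.mulVec x i = ∑ k, σ k * (∑ j, v k j * x j) * w k i := by
    intro x i
    simp only [Matrix.mulVec, dotProduct, hJent, Finset.sum_mul]
    rw [Finset.sum_comm]
    apply Finset.sum_congr rfl
    intro k _
    rw [Finset.mul_sum, Finset.sum_mul]
    apply Finset.sum_congr rfl
    intros; ring
  have hJTmul : ∀ (y : Fin n → ℝ) (j : Fin N),
      J.transpose.mulVec y j = ∑ k, σ k * (∑ i, w k i * y i) * v k j := by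
    intro y j
    simp only [Matrix.mulVec, dotProduct, Matrix.transpose_apply, hJent, Finset.sum_mul]
    rw [Finset.sum_comm]
    apply Finset.sum_congr rfl
    intro k _
    rw [Finset.mul_sum, Finset.sum_mul]
    apply Finset.sum_congr rfl
    intros; ring
  -- step size bound
  have hησ : ∀ i, η * σ i ^ 2 ≤ 1 := by
    intro i
    have hle : σ i ≤ σ ⟨0, hn⟩ := hσord ⟨0, hn⟩ i (by exact Fin.mk_le_of_le_val (Nat.zero_le _))
    rcases eq_or_lt_of_le (hσnonneg ⟨0, hn⟩) with h0 | h0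
    · have : σ i = 0 := le_antisymm (h0 ▸ hle) (hσnonneg i)
      simp [this]
    · rw [le_div_iff₀ (by positivity)] at hη
      have hsq2 : σ i ^ 2 ≤ σ ⟨0, hn⟩ ^ 2 := by nlinarith [hσnonneg i]
      nlinarith [mul_le_mul_of_nonneg_left hsq2 hη0]
  -- the main coordinate identity
  have hmain : ∀ t, θ t - θ0 = fun j => ∑ i, a i t * v i j := by
    intro t
    induction t with
    | zero =>
      funext j
      simp [hθ0, ha]
    | succ t ih =>
      funext j
      have hJd : ∀ i, J.mulVec (θ t - θ0) i = ∑ k, (σ k * a k t) * w k i := by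
        intro i
        rw [hJmul, ih]
        apply Finset.sum_congr rfl
        intro k _
        rw [dot_coeff hv (fun i => a i t) k]
      have hinner : ∀ k, (∑ i, w k i * (r0 + J.mulVec (θ t - θ0)) i)
          = c k + σ k * a k t := by
        intro k
        have : ∀ i, w k i * (r0 + J.mulVec (θ t - θ0)) i
            = w k i * r0 i + w k i * (∑ m, (σ m * a m t) * w m i) := by
          intro i
          rw [Pi.add_apply, hJd i, mul_add]
        simp only [this, Finset.sum_add_distrib]
        congr 1
        exact dot_coeff hw (fun m => σ m * a m t) k
      have hT : J.transpose.mulVec (r0 + J.mulVec (θ t - θ0)) j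
          = ∑ k, σ k * (c k + σ k * a k t) * v k j := by
        rw [hJTmul]
        apply Finset.sum_congr rfl
        intro k _
        rw [hinner k]
      have hrec : ∀ k, a k (t + 1) = a k t - η * (σ k * (c k + σ k * a k t)) := by
        intro k
        simp only [ha, hp]
        rcases eq_or_lt_of_le (hσnonneg k) with h0 | h0
        · rw [← h0]; ring
        · field_simp
          ring
      have : (θ (t+1) - θ0) j = (θ t - θ0) j
          - η * J.transpose.mulVec (r0 + J.mulVec (θ t - θ0)) j := by
        rw [hθ t]
        simp only [Pi.sub_apply, Pi.smul_apply, smul_eq_mul]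
        ring
      rw [this, hT, ih]
      simp only
      rw [Finset.mul_sum, ← Finset.sum_sub_distrib]
      apply Finset.sum_congr rfl
      intro k _
      rw [hrec k]
      ring
  -- squared norms in coordinates
  have hsq : ∀ t, eNorm (θ t - θ0) ^ 2 = ∑ i, (a i t) ^ 2 := by
    intro t
    rw [eNorm, Real.sq_sqrt (by positivity), hmain t]
    exact sum_sq_coeff hv (fun i => a i t)
  have hpinv : (∑ i, (σ i)⁻¹ • Matrix.vecMulVec (v i) (w i)).mulVec r0
      = fun j => ∑ i, ((σ i)⁻¹ * c i) * v i j := by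
    funext j
    simp only [Matrix.mulVec, dotProduct, Matrix.sum_apply, Matrix.smul_apply,
      Matrix.vecMulVec_apply, smul_eq_mul, Finset.sum_mul]
    rw [Finset.sum_comm]
    apply Finset.sum_congr rfl
    intro i _
    simp only [hc, dot, Finset.mul_sum, Finset.sum_mul]
    apply Finset.sum_congr rfl
    intros; ring
  have hpsq : (∑ j, ((∑ i, (σ i)⁻¹ • Matrix.vecMulVec (v i) (w i)).mulVec r0 j ^ 2))
      = ∑ i, ((σ i)⁻¹ * c i) ^ 2 := by
    rw [hpinv]
    exact sum_sq_coeff hv _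
  intro t
  constructor
  · rw [hsq t]
    apply Finset.sum_congr rfl
    intro i _
    simp only [ha, hp, hc, neg_sq]
  · -- termwise bound
    have hterm : ∀ i, (a i t) ^ 2 ≤ ((σ i)⁻¹ * c i) ^ 2 := by
      intro i
      have hp0 : 0 ≤ p i := by simp only [hp]; nlinarith [hησ i]
      have hp1 : p i ≤ 1 := by simp only [hp]; nlinarith [hσnonneg i, sq_nonneg (σ i)]
      have hq0 : 0 ≤ p i ^ t := pow_nonneg hp0 t
      have hq1 : p i ^ t ≤ 1 := pow_le_one₀ hp0 hp1
      have h1 : a i t = -((c i / σ i) * (1 - p i ^ t)) := by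
        simp only [ha]; ring
      have h2 : (σ i)⁻¹ * c i = c i / σ i := by rw [inv_mul_eq_div]
      rw [h1, h2, neg_sq]
      nlinarith [sq_nonneg (c i / σ i), mul_nonneg (sq_nonneg (c i / σ i)) hq0,
        mul_nonneg (mul_nonneg (sq_nonneg (c i / σ i)) hq0) (sub_nonneg.2 hq1)]
    rw [eNorm, eNorm]
    apply Real.sqrt_le_sqrt
    rw [hpsq]
    have : ∑ j, ((θ t - θ0) j) ^ 2 = ∑ i, (a i t) ^ 2 := by
      rw [hmain t]; exact sum_sq_coeff hv _
    rw [this]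
    exact Finset.sum_le_sum fun i _ => hterm i
  
end
end

section
/- Let J ∈ ℝ^{n×N} (N ≥ n) have singular value decomposition J = Σ_{i=1}^n σ_i w_i v_iᵀ with σ_1 ≤ β, let r ∈ ℝ^n, and let 0 ≤ η ≤ 1/β². Then for every integer t ≥ 0, ‖Jᵀ (I − η J Jᵀ)^t r‖ ≤ β² ‖J† r‖, where J† is the Moore–Penrose pseudo-inverse of J. -/
noncomputable section

lemma ortho_dot {n N : ℕ} {v : Fin n → Fin N → ℝ} (hv : OrthonormalFam v) (a b : Fin n → ℝ) :
    ∑ m, (∑ i, a i * v i m) * (∑ l, b l * v l m) = ∑ i, a i * b i := by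
  have step : ∀ i l : Fin n, ∑ m, a i * v i m * (b l * v l m)
      = a i * b l * (if i = l then 1 else 0) := by
    intro i l
    rw [← hv i l, dot, Finset.mul_sum]
    exact Finset.sum_congr rfl fun m _ => by ring
  calc ∑ m, (∑ i, a i * v i m) * (∑ l, b l * v l m)
      = ∑ m, ∑ i, ∑ l, a i * v i m * (b l * v l m) := by
        simp only [Finset.sum_mul, Finset.mul_sum]
        exact Finset.sum_congr rfl fun m _ => Finset.sum_comm
    _ = ∑ i, ∑ l, ∑ m, a i * v i m * (b l * v l m) := by
        rw [Finset.sum_comm]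
        exact Finset.sum_congr rfl fun i _ => Finset.sum_comm
    _ = ∑ i, ∑ l, a i * b l * (if i = l then 1 else 0) :=
        Finset.sum_congr rfl fun i _ => Finset.sum_congr rfl fun l _ => step i l
    _ = ∑ i, a i * b i := by simp

lemma ortho_coeff {p n : ℕ} {w : Fin n → Fin p → ℝ} (hw : OrthonormalFam w)
    (P : Fin n → ℝ) (i : Fin n) :
    ∑ m, w i m * (∑ l, P l * w l m) = P i := by
  have step : ∀ l, ∑ m, w i m * (P l * w l m) = P l * (if i = l then 1 else 0) := by
    intro l
    rw [← hw i l, dot, Finset.mul_sum]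
    exact Finset.sum_congr rfl fun m _ => by ring
  calc ∑ m, w i m * (∑ l, P l * w l m) = ∑ m, ∑ l, w i m * (P l * w l m) := by
        simp only [Finset.mul_sum]
    _ = ∑ l, ∑ m, w i m * (P l * w l m) := Finset.sum_comm
    _ = ∑ l, P l * (if i = l then 1 else 0) := Finset.sum_congr rfl fun l _ => step l
    _ = P i := by simp

lemma sum_vecMulVec_mulVec {n p m : ℕ} (a : Fin n → ℝ) (u : Fin n → Fin p → ℝ)
    (x : Fin n → Fin m → ℝ) (y : Fin m → ℝ) (j : Fin p) :
    ((∑ i, a i • Matrix.vecMulVec (u i) (x i)).mulVec y) j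
      = ∑ i, a i * (∑ k, x i k * y k) * u i j := by
  simp only [Matrix.mulVec, dotProduct, Matrix.sum_apply, Matrix.smul_apply,
    Matrix.vecMulVec_apply, smul_eq_mul, Finset.sum_mul]
  rw [Finset.sum_comm]
  refine Finset.sum_congr rfl fun i _ => ?_
  rw [Finset.mul_sum, Finset.sum_mul]
  exact Finset.sum_congr rfl fun k _ => by ring

/-- Let `J = Σᵢ σᵢ wᵢ vᵢᵀ` (SVD, `N ≥ n`) with `σ₁ ≤ β`, let `r ∈ ℝ^n`, and
`0 ≤ η ≤ 1/β²`.  Then for every `t ≥ 0`, `‖Jᵀ (I − η J Jᵀ)^t r‖ ≤ β² ‖J† r‖`, where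
`J† = Σᵢ σᵢ⁻¹ vᵢ wᵢᵀ` is the Moore–Penrose pseudo-inverse of `J` (with `0⁻¹ = 0`). -/
theorem transpose_power_residual_bound {n N : ℕ} (hnN : n ≤ N) (hn : 0 < n)
    (J : Matrix (Fin n) (Fin N) ℝ)
    (w : Fin n → Fin n → ℝ) (v : Fin n → Fin N → ℝ) (σ : Fin n → ℝ)
    (hw : OrthonormalFam w) (hv : OrthonormalFam v)
    (hσord : ∀ i j : Fin n, i ≤ j → σ j ≤ σ i) (hσnonneg : ∀ i, 0 ≤ σ i)
    (hJ : J = ∑ i, σ i • Matrix.vecMulVec (w i) (v i))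
    (β : ℝ) (hβ : σ ⟨0, hn⟩ ≤ β)
    (r : Fin n → ℝ) (η : ℝ) (hη0 : 0 ≤ η) (hη : η ≤ 1 / β ^ 2) :
    ∀ t : ℕ,
      eNorm (J.transpose.mulVec
          ((((1 : Matrix (Fin n) (Fin n) ℝ) - η • (J * J.transpose)) ^ t).mulVec r)) ≤
        β ^ 2 * eNorm ((∑ i, (σ i)⁻¹ • Matrix.vecMulVec (v i) (w i)).mulVec r) := by
  intro t
  have hσβ : ∀ i, σ i ≤ β := fun i =>
    le_trans (hσord ⟨0, hn⟩ i (by simp [Fin.le_def])) hβ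
  -- the rows of w form an orthonormal basis; completeness relation
  have hWfull : ∀ j k : Fin n, (∑ i, w i j * w i k) = if j = k then 1 else 0 := by
    have h1 : (Matrix.of w) * (Matrix.of w).transpose = 1 := by
      ext i l
      simpa [Matrix.mul_apply, Matrix.one_apply, dot] using hw i l
    have h2 : (Matrix.of w).transpose * (Matrix.of w) = 1 := mul_eq_one_comm.mp h1
    intro j k
    have := congrArg (fun M => M j k) h2
    simpa [Matrix.mul_apply, Matrix.one_apply] using this
  -- expansion of r in the basis w
  have hr : ∀ j, r j = ∑ i, (∑ m, w i m * r m) * w i j := by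
    intro j
    have : ∀ m, ∑ i, w i m * r m * w i j = (∑ i, w i j * w i m) * r m := by
      intro m
      rw [Finset.sum_mul]
      exact Finset.sum_congr rfl fun i _ => by ring
    calc r j = ∑ m, (if j = m then 1 else 0) * r m := by simp
      _ = ∑ m, (∑ i, w i j * w i m) * r m :=
          Finset.sum_congr rfl fun m _ => by rw [hWfull j m]
      _ = ∑ m, ∑ i, w i m * r m * w i j := Finset.sum_congr rfl fun m _ => (this m).symm
      _ = ∑ i, ∑ m, w i m * r m * w i j := Finset.sum_comm
      _ = ∑ i, (∑ m, w i m * r m) * w i j := by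
          exact Finset.sum_congr rfl fun i _ => by rw [Finset.sum_mul]
  have hJT : J.transpose = ∑ i, σ i • Matrix.vecMulVec (v i) (w i) := by
    rw [hJ, Matrix.transpose_sum]
    refine Finset.sum_congr rfl fun i _ => ?_
    rw [Matrix.transpose_smul]
    congr 1
    ext a b
    simp [Matrix.vecMulVec_apply, mul_comm]
  -- action of Jᵀ on a vector expanded in the w basis
  have hJTv : ∀ (P : Fin n → ℝ),
      J.transpose.mulVec (fun m => ∑ l, P l * w l m)
        = fun k => ∑ i, (σ i * P i) * v i k := by
    intro P
    funext k
    rw [hJT, sum_vecMulVec_mulVec]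
    refine Finset.sum_congr rfl fun i _ => ?_
    rw [ortho_coeff hw P i]
  -- action of J on a vector expanded in the v family
  have hJv : ∀ (Q : Fin n → ℝ),
      J.mulVec (fun k => ∑ l, Q l * v l k) = fun j => ∑ i, (σ i * Q i) * w i j := by
    intro Q
    funext j
    rw [hJ, sum_vecMulVec_mulVec]
    refine Finset.sum_congr rfl fun i _ => ?_
    rw [ortho_coeff hv Q i]
  -- the power iteration
  have hpow : ∀ s : ℕ,
      (((1 : Matrix (Fin n) (Fin n) ℝ) - η • (J * J.transpose)) ^ s).mulVec r
        = fun j => ∑ i, ((1 - η * σ i ^ 2) ^ s * (∑ m, w i m * r m)) * w i j := by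
    intro s
    induction s with
    | zero =>
      funext j
      simpa [Matrix.one_mulVec] using hr j
    | succ s ih =>
      funext j
      rw [pow_succ', ← Matrix.mulVec_mulVec, ih, Matrix.sub_mulVec,
        Matrix.smul_mulVec, ← Matrix.mulVec_mulVec,
        hJTv (fun i => (1 - η * σ i ^ 2) ^ s * (∑ m, w i m * r m)),
        hJv (fun i => σ i * ((1 - η * σ i ^ 2) ^ s * (∑ m, w i m * r m))),
        Matrix.one_mulVec]
      simp only [Pi.sub_apply, Pi.smul_apply, smul_eq_mul]
      rw [Finset.mul_sum, ← Finset.sum_sub_distrib]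
      refine Finset.sum_congr rfl fun i _ => ?_
      ring
  -- the two sides as expansions in the v family
  have hLHS : J.transpose.mulVec
      ((((1 : Matrix (Fin n) (Fin n) ℝ) - η • (J * J.transpose)) ^ t).mulVec r)
      = fun k => ∑ i, (σ i * ((1 - η * σ i ^ 2) ^ t * (∑ m, w i m * r m))) * v i k := by
    rw [hpow t]
    exact hJTv _
  have hRHS : (∑ i, (σ i)⁻¹ • Matrix.vecMulVec (v i) (w i)).mulVec r
      = fun k => ∑ i, ((σ i)⁻¹ * (∑ m, w i m * r m)) * v i k := by
    funext k
    rw [sum_vecMulVec_mulVec]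
  -- norms of v-expansions
  have hnorm : ∀ (a : Fin n → ℝ),
      eNorm (fun k : Fin N => ∑ i, a i * v i k) = Real.sqrt (∑ i, a i ^ 2) := by
    intro a
    rw [eNorm]
    congr 1
    calc ∑ k, (∑ i, a i * v i k) ^ 2
        = ∑ k, (∑ i, a i * v i k) * (∑ l, a l * v l k) :=
          Finset.sum_congr rfl fun k _ => sq (∑ i, a i * v i k)
      _ = ∑ i, a i * a i := ortho_dot hv a a
      _ = ∑ i, a i ^ 2 := Finset.sum_congr rfl fun i _ => (sq (a i)).symm
  rw [hLHS, hRHS, hnorm, hnorm]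
  -- termwise estimate
  have hterm : ∀ i, (σ i * ((1 - η * σ i ^ 2) ^ t * (∑ m, w i m * r m))) ^ 2
      ≤ β ^ 4 * ((σ i)⁻¹ * (∑ m, w i m * r m)) ^ 2 := by
    intro i
    set c : ℝ := ∑ m, w i m * r m
    rcases eq_or_lt_of_le (hσnonneg i) with h0 | h0
    · rw [← h0, zero_mul]
      have h00 : (0:ℝ) ^ 2 = 0 := by norm_num
      rw [h00]
      positivity
    · have hβpos : 0 < β := lt_of_lt_of_le h0 (hσβ i)
      have hx1 : η * σ i ^ 2 ≤ 1 := by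
        have h1 : η * σ i ^ 2 ≤ (1 / β ^ 2) * β ^ 2 := by
          apply mul_le_mul hη (by nlinarith [hσβ i]) (by positivity) (by positivity)
        have h2 : (1 / β ^ 2) * β ^ 2 = 1 := by field_simp
        linarith
      have hx0 : 0 ≤ η * σ i ^ 2 := by positivity
      have hpt : ((1 - η * σ i ^ 2) ^ t) ^ 2 ≤ 1 := by
        have hrw : ((1 - η * σ i ^ 2) ^ t) ^ 2 = ((1 - η * σ i ^ 2) ^ 2) ^ t := by
          rw [← pow_mul, ← pow_mul, Nat.mul_comm t 2]
        rw [hrw]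
        exact pow_le_one₀ (sq_nonneg _) (by nlinarith)
      have hinv : ((σ i)⁻¹ * c) ^ 2 = c ^ 2 / σ i ^ 2 := by
        rw [mul_pow, inv_pow, inv_mul_eq_div]
      rw [hinv, ← mul_div_assoc, le_div_iff₀ (by positivity)]
      have h4 : σ i ^ 4 ≤ β ^ 4 := pow_le_pow_left₀ (hσnonneg i) (hσβ i) 4
      have e1 : σ i ^ 4 * (((1 - η * σ i ^ 2) ^ t) ^ 2 * c ^ 2)
          ≤ σ i ^ 4 * (1 * c ^ 2) :=
        mul_le_mul_of_nonneg_left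
          (mul_le_mul_of_nonneg_right hpt (sq_nonneg _)) (by positivity)
      have e2 : σ i ^ 4 * c ^ 2 ≤ β ^ 4 * c ^ 2 :=
        mul_le_mul_of_nonneg_right h4 (sq_nonneg _)
      nlinarith [e1, e2]
  calc Real.sqrt (∑ i, (σ i * ((1 - η * σ i ^ 2) ^ t * (∑ m, w i m * r m))) ^ 2)
      ≤ Real.sqrt (β ^ 4 * ∑ i, ((σ i)⁻¹ * (∑ m, w i m * r m)) ^ 2) := by
        apply Real.sqrt_le_sqrt
        rw [Finset.mul_sum]
        exact Finset.sum_le_sum fun i _ => hterm i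
    _ = β ^ 2 * Real.sqrt (∑ i, ((σ i)⁻¹ * (∑ m, w i m * r m)) ^ 2) := by
        rw [show (β ^ 4 : ℝ) = (β ^ 2) ^ 2 by ring, Real.sqrt_mul (sq_nonneg _),
          Real.sqrt_sq (sq_nonneg β)]

end
end

section
/- Let X ∈ ℝ^{n×N} with N ≥ n, let B be an n×n positive semidefinite matrix, and suppose ‖X Xᵀ − B‖ ≤ ε̃² for some scalar ε̃ ≥ 0, where ‖·‖ is the spectral norm. Then there exists a matrix J ∈ ℝ^{n×N} with B = J Jᵀ such that ‖J − X‖ ≤ 2 ε̃. -/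
open Matrix
open scoped Matrix.Norms.L2Operator

noncomputable section

/-- Spectral (ℓ² operator) norm of a real matrix. -/
def sNorm {m n : Type*} [Fintype m] [Fintype n] [DecidableEq n]
    (A : Matrix m n ℝ) : ℝ :=
  ‖LinearMap.toContinuousLinearMap (Matrix.toEuclideanLin A)‖

lemma sNorm_eq_l2 {m n : Type*} [Fintype m] [Fintype n] [DecidableEq n] (A : Matrix m n ℝ) :
    sNorm A = ‖A‖ := rfl

namespace Matrix.PosSemidef
variable {ι : Type*} [Fintype ι] [DecidableEq ι] {A : Matrix ι ι ℝ} (hA : A.PosSemidef)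
def sqrt : Matrix ι ι ℝ :=
  (hA.1.eigenvectorUnitary : Matrix ι ι ℝ) * diagonal (fun j => Real.sqrt (hA.1.eigenvalues j)) *
    star (hA.1.eigenvectorUnitary : Matrix ι ι ℝ)
include hA in
lemma posSemidef_sqrt : hA.sqrt.PosSemidef :=
  (posSemidef_diagonal_iff.mpr (fun i => Real.sqrt_nonneg (hA.1.eigenvalues i))).mul_mul_conjTranspose_same
    (hA.1.eigenvectorUnitary : Matrix ι ι ℝ)
lemma sqrt_mul_self : hA.sqrt * hA.sqrt = A := by
  have hU : star (hA.1.eigenvectorUnitary : Matrix ι ι ℝ) * hA.1.eigenvectorUnitary = 1 :=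
    Unitary.coe_star_mul_self _
  rw [sqrt, show ∀ a b c d e f : Matrix ι ι ℝ, a*b*c*(d*e*f) = a*b*(c*d)*e*f from by
    intros; simp only [mul_assoc], hU, mul_one, mul_assoc (hA.1.eigenvectorUnitary : Matrix ι ι ℝ), diagonal_mul_diagonal]
  conv_rhs => rw [hA.1.spectral_theorem, Unitary.conjStarAlgAut_apply]
  congr 3; funext i; simp [Real.mul_self_sqrt (hA.eigenvalues_nonneg i)]
end Matrix.PosSemidef



lemma toEuclideanLin_eigen {C : Matrix (Fin n) (Fin n) ℝ} (hC : C.IsHermitian) (i : Fin n) :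
    Matrix.toEuclideanLin C (hC.eigenvectorBasis i) = hC.eigenvalues i • hC.eigenvectorBasis i := by
  apply (WithLp.equiv 2 _).injective
  simp [Matrix.toEuclideanLin_apply, hC.mulVec_eigenvectorBasis]

lemma norm_le_of_eigs {C : Matrix (Fin n) (Fin n) ℝ} (hC : C.IsHermitian) {c : ℝ} (hc : 0 ≤ c)
    (h : ∀ i, |hC.eigenvalues i| ≤ c) : ‖C‖ ≤ c := by
  rw [l2_opNorm_def]
  apply ContinuousLinearMap.opNorm_le_bound _ hc
  intro x
  set b := hC.eigenvectorBasis with hb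
  set T := (Matrix.toEuclideanLin.trans LinearMap.toContinuousLinearMap) C with hT
  have hrepr : ∀ i, b.repr (T x) i = hC.eigenvalues i * b.repr x i := by
    intro i
    rw [b.repr_apply_apply, b.repr_apply_apply]
    have hsym := (Matrix.isHermitian_iff_isSymmetric.1 hC)
    have h1 : (inner ℝ (b i) (T x) : ℝ) = inner ℝ (Matrix.toEuclideanLin C (b i)) x :=
      (hsym (b i) x).symm
    rw [h1, toEuclideanLin_eigen hC i, inner_smul_left]
    simp [hb]
  have key : ‖b.repr (T x)‖ ≤ c * ‖b.repr x‖ := by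
    rw [EuclideanSpace.norm_eq, EuclideanSpace.norm_eq]
    rw [← Real.sqrt_sq hc, ← Real.sqrt_mul (sq_nonneg c)]
    apply Real.sqrt_le_sqrt
    rw [Finset.mul_sum]
    apply Finset.sum_le_sum
    intro i _
    rw [hrepr i]
    simp only [Real.norm_eq_abs, abs_mul, mul_pow]
    exact mul_le_mul_of_nonneg_right (pow_le_pow_left₀ (abs_nonneg _) (h i) 2) (by positivity)
  calc ‖T x‖ = ‖b.repr (T x)‖ := (b.repr.norm_map _).symm
    _ ≤ c * ‖b.repr x‖ := key
    _ = c * ‖x‖ := by rw [b.repr.norm_map]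


lemma dot_self_basis {C : Matrix (Fin n) (Fin n) ℝ} (hC : C.IsHermitian) (i : Fin n) :
    ⇑(hC.eigenvectorBasis i) ⬝ᵥ ⇑(hC.eigenvectorBasis i) = 1 := by
  have h := hC.eigenvectorBasis.orthonormal.1 i
  have : ‖hC.eigenvectorBasis i‖^2 = ⇑(hC.eigenvectorBasis i) ⬝ᵥ ⇑(hC.eigenvectorBasis i) := by
    rw [← real_inner_self_eq_norm_sq]
    simp only [PiLp.inner_apply, RCLike.inner_apply, conj_trivial, dotProduct]
  rw [← this, h]; norm_num

lemma sqrt_perturb {A B : Matrix (Fin n) (Fin n) ℝ} (hA : A.PosSemidef) (hB : B.PosSemidef) :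
    ‖hA.sqrt - hB.sqrt‖ ≤ Real.sqrt ‖A - B‖ := by
  have hCh : (hA.sqrt - hB.sqrt).IsHermitian := hA.posSemidef_sqrt.1.sub hB.posSemidef_sqrt.1
  apply norm_le_of_eigs hCh (Real.sqrt_nonneg _)
  intro i
  set C := hA.sqrt - hB.sqrt with hCdef
  set μ := hCh.eigenvalues i with hμdef
  set v : Fin n → ℝ := ⇑(hCh.eigenvectorBasis i) with hvdef
  have hv1 : v ⬝ᵥ v = 1 := dot_self_basis hCh i
  have hCv : C *ᵥ v = μ • v := hCh.mulVec_eigenvectorBasis i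
  set a := v ⬝ᵥ (hA.sqrt *ᵥ v) with hadef
  set b := v ⬝ᵥ (hB.sqrt *ᵥ v) with hbdef
  have ha : 0 ≤ a := by simpa using hA.posSemidef_sqrt.dotProduct_mulVec_nonneg v
  have hb : 0 ≤ b := by simpa using hB.posSemidef_sqrt.dotProduct_mulVec_nonneg v
  have hμab : μ = a - b := by
    have : v ⬝ᵥ (C *ᵥ v) = μ := by rw [hCv, dotProduct_smul, hv1]; simp
    rw [← this, hCdef, sub_mulVec, dotProduct_sub]
  have hfact : A - B = hA.sqrt * C + C * hB.sqrt := by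
    rw [hCdef]
    have h3 : hA.sqrt * (hA.sqrt - hB.sqrt) + (hA.sqrt - hB.sqrt) * hB.sqrt
        = hA.sqrt * hA.sqrt - hB.sqrt * hB.sqrt := by noncomm_ring
    rw [h3, hA.sqrt_mul_self, hB.sqrt_mul_self]
  have hCt : Cᵀ = C := hCh
  have hkey : v ⬝ᵥ ((A - B) *ᵥ v) = μ * (a + b) := by
    rw [hfact, add_mulVec, dotProduct_add, ← mulVec_mulVec, ← mulVec_mulVec, hCv,
      mulVec_smul, dotProduct_smul, dotProduct_mulVec (v) C, ← mulVec_transpose, hCt, hCv,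
      smul_dotProduct]
    simp [mul_add, hadef, hbdef]
  have habs : |v ⬝ᵥ ((A - B) *ᵥ v)| ≤ ‖A - B‖ := by
    set w : EuclideanSpace ℝ (Fin n) := (EuclideanSpace.equiv (Fin n) ℝ).symm ((A - B) *ᵥ v) with hw
    have h1 : v ⬝ᵥ ((A - B) *ᵥ v) = (inner ℝ (hCh.eigenvectorBasis i) w : ℝ) := by
      simp [PiLp.inner_apply, RCLike.inner_apply, dotProduct, hw, hvdef, mul_comm]
    have h2 : |(inner ℝ (hCh.eigenvectorBasis i) w : ℝ)| ≤ ‖hCh.eigenvectorBasis i‖ * ‖w‖ :=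
      abs_real_inner_le_norm _ _
    have h3 : ‖w‖ ≤ ‖A - B‖ * ‖hCh.eigenvectorBasis i‖ := l2_opNorm_mulVec (A - B) _
    have h4 : ‖hCh.eigenvectorBasis i‖ = 1 := hCh.eigenvectorBasis.orthonormal.1 i
    rw [h1]
    rw [h4] at h2 h3
    simp at h2 h3
    calc |(inner ℝ (hCh.eigenvectorBasis i) w : ℝ)| ≤ ‖w‖ := h2
      _ ≤ ‖A - B‖ := h3
  have hsq : μ^2 ≤ ‖A - B‖ := by
    rcases le_or_gt 0 μ with hs | hs
    · nlinarith [abs_le.1 habs]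
    · nlinarith [abs_le.1 habs]
  calc |μ| = Real.sqrt (μ^2) := (Real.sqrt_sq_eq_abs μ).symm
    _ ≤ Real.sqrt ‖A - B‖ := Real.sqrt_le_sqrt hsq

lemma inner_eq_dot {k : ℕ} (x y : EuclideanSpace ℝ (Fin k)) : (inner ℝ x y : ℝ) = ⇑x ⬝ᵥ ⇑y := by
  simp [PiLp.inner_apply, RCLike.inner_apply, dotProduct, mul_comm]

lemma exists_polar {n N : ℕ} (hnN : n ≤ N) (X : Matrix (Fin n) (Fin N) ℝ)
    (hA : (X * Xᵀ).PosSemidef) :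
    ∃ U : Matrix (Fin n) (Fin N) ℝ, U * Uᵀ = 1 ∧ hA.sqrt * U = X := by
  classical
  have hAh : (X * Xᵀ).IsHermitian := hA.1
  set lam := hAh.eigenvalues with hlamdef
  have hlam : ∀ j, 0 ≤ lam j := hA.eigenvalues_nonneg
  set b := hAh.eigenvectorBasis with hbdef
  set y : Fin n → (Fin N → ℝ) := fun j => Xᵀ *ᵥ ⇑(b j) with hydef
  have hbij : ∀ i j, ⇑(b i) ⬝ᵥ ⇑(b j) = if i = j then (1:ℝ) else 0 := by
    intro i j
    rw [← inner_eq_dot]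
    exact orthonormal_iff_ite.mp b.orthonormal i j
  have hyy : ∀ i j, y i ⬝ᵥ y j = if i = j then lam j else 0 := by
    intro i j
    have h0 : y i ⬝ᵥ y j = (⇑(b i) ᵥ* X) ⬝ᵥ (Xᵀ *ᵥ ⇑(b j)) := by
      congr 1
      exact mulVec_transpose X ⇑(b i)
    rw [h0, ← dotProduct_mulVec, mulVec_mulVec, hAh.mulVec_eigenvectorBasis,
      dotProduct_smul, hbij]
    split <;> simp [mul_comm, hlamdef]
  have hy0 : ∀ j, lam j = 0 → y j = 0 := by
    intro j hj
    have h1 : y j ⬝ᵥ y j = 0 := by rw [hyy j j, if_pos rfl, hj]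
    funext k
    have h2 : ∀ k' ∈ Finset.univ, 0 ≤ y j k' * y j k' := fun k' _ => mul_self_nonneg _
    have h3 := (Finset.sum_eq_zero_iff_of_nonneg h2).mp h1 k (Finset.mem_univ k)
    have := mul_self_eq_zero.mp h3
    simpa using this
  set v : Fin N → EuclideanSpace ℝ (Fin N) := fun k =>
    if h : ∃ hk : (k : ℕ) < n, lam ⟨k, hk⟩ ≠ 0 then
      (Real.sqrt (lam ⟨k, h.choose⟩))⁻¹ • ((EuclideanSpace.equiv (Fin N) ℝ).symm (y ⟨k, h.choose⟩))
    else 0 with hvdef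
  set s : Set (Fin N) := {k | ∃ hk : (k : ℕ) < n, lam ⟨k, hk⟩ ≠ 0} with hsdef
  have hvs : ∀ (k : Fin N) (hk : (k : ℕ) < n), lam ⟨k, hk⟩ ≠ 0 →
      v k = (Real.sqrt (lam ⟨k, hk⟩))⁻¹ • ((EuclideanSpace.equiv (Fin N) ℝ).symm (y ⟨k, hk⟩)) := by
    intro k hk hne
    simp only [hvdef]
    rw [dif_pos ⟨hk, hne⟩]
  have horth : Orthonormal ℝ (s.restrict v) := by
    rw [orthonormal_iff_ite]
    rintro ⟨ki, hki⟩ ⟨kj, hkj⟩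
    obtain ⟨hi, hine⟩ := hki
    obtain ⟨hj, hjne⟩ := hkj
    rw [Set.restrict, Set.domRestrict_apply, Set.domRestrict_apply, hvs ki hi hine, hvs kj hj hjne,
      real_inner_smul_left, real_inner_smul_right, inner_eq_dot]
    have hdot : y ⟨ki, hi⟩ ⬝ᵥ y ⟨kj, hj⟩ = if (⟨ki,hi⟩ : Fin n) = ⟨kj,hj⟩ then lam ⟨kj,hj⟩ else 0 :=
      hyy _ _
    have hcoe : (⇑((EuclideanSpace.equiv (Fin N) ℝ).symm (y ⟨ki, hi⟩)) ⬝ᵥ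
        ⇑((EuclideanSpace.equiv (Fin N) ℝ).symm (y ⟨kj, hj⟩))) = y ⟨ki, hi⟩ ⬝ᵥ y ⟨kj, hj⟩ := rfl
    rw [hcoe, hdot]
    by_cases hij : ki = kj
    · subst hij
      rw [if_pos rfl, if_pos rfl]
      have hpos : 0 < lam ⟨ki, hi⟩ := lt_of_le_of_ne (hlam _) (Ne.symm hine)
      have h5 : Real.sqrt (lam ⟨ki, hi⟩) ≠ 0 := ne_of_gt (Real.sqrt_pos.mpr hpos)
      have hsq := Real.mul_self_sqrt (hlam ⟨ki, hi⟩)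
      field_simp; rw [Real.sq_sqrt (hlam _)]
    · rw [if_neg (fun h => hij (Fin.ext (by simpa [Fin.ext_iff] using h))),
        if_neg (fun h => hij (by simpa [Subtype.ext_iff] using h))]
      simp
  have card : Module.finrank ℝ (EuclideanSpace ℝ (Fin N)) = Fintype.card (Fin N) :=
    finrank_euclideanSpace
  obtain ⟨bb, hbb⟩ := horth.exists_orthonormalBasis_extension_of_card_eq card
  set w : Fin n → EuclideanSpace ℝ (Fin N) := fun j => bb (Fin.castLE hnN j) with hwdef
  have hww : ∀ i j, ⇑(w i) ⬝ᵥ ⇑(w j) = if i = j then (1:ℝ) else 0 := by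
    intro i j
    rw [← inner_eq_dot]
    have := orthonormal_iff_ite.mp bb.orthonormal (Fin.castLE hnN i) (Fin.castLE hnN j)
    rw [hwdef]
    simp only []
    rw [this]
    simp [Fin.castLE_inj]
  have hwy : ∀ j : Fin n, lam j ≠ 0 → ∀ k, Real.sqrt (lam j) * w j k = y j k := by
    intro j hne k
    have hlt : ((Fin.castLE hnN j : Fin N) : ℕ) < n := j.2
    have hjj : (⟨((Fin.castLE hnN j : Fin N) : ℕ), hlt⟩ : Fin n) = j := Fin.ext rfl
    have hmem : (Fin.castLE hnN j) ∈ s := ⟨hlt, by rw [hjj]; exact hne⟩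
    have h1 : w j = v (Fin.castLE hnN j) := by rw [hwdef]; exact hbb _ hmem
    have h2 : v (Fin.castLE hnN j)
        = (Real.sqrt (lam j))⁻¹ • ((EuclideanSpace.equiv (Fin N) ℝ).symm (y j)) := by
      rw [hvs _ hlt (by rw [hjj]; exact hne), hjj]
    rw [h1, h2]
    have h3 : ((Real.sqrt (lam j))⁻¹ • ((EuclideanSpace.equiv (Fin N) ℝ).symm (y j))) k
        = (Real.sqrt (lam j))⁻¹ * y j k := rfl
    rw [h3]
    have hpos : 0 < lam j := lt_of_le_of_ne (hlam _) (Ne.symm hne)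
    have h5 : Real.sqrt (lam j) ≠ 0 := ne_of_gt (Real.sqrt_pos.mpr hpos)
    field_simp
  -- matrices
  set W : Matrix (Fin n) (Fin N) ℝ := Matrix.of (fun j k => w j k) with hWdef
  have hWWt : W * Wᵀ = 1 := by
    ext i j
    rw [Matrix.mul_apply]
    have := hww i j
    simpa [dotProduct, Matrix.one_apply, hWdef] using this
  set V : Matrix (Fin n) (Fin n) ℝ := (hAh.eigenvectorUnitary : Matrix (Fin n) (Fin n) ℝ) with hVdef
  have hV1 : V * star V = 1 := mem_unitaryGroup_iff.mp hAh.eigenvectorUnitary.2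
  have hV2 : star V * V = 1 := mem_unitaryGroup_iff'.mp hAh.eigenvectorUnitary.2
  have hVt : Vᵀ = star V := by
    rw [Matrix.star_eq_conjTranspose, Matrix.conjTranspose_eq_transpose_of_trivial]
  refine ⟨V * W, ?_, ?_⟩
  · rw [Matrix.transpose_mul, ← Matrix.mul_assoc, Matrix.mul_assoc V W, hWWt,
      Matrix.mul_one, hVt, hV1]
  · have hsqrt : hA.sqrt = V * Matrix.diagonal (fun j => Real.sqrt (lam j)) * star V := rfl
    have hDW : Matrix.diagonal (fun j => Real.sqrt (lam j)) * W = star V * X := by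
      ext j k
      rw [Matrix.diagonal_mul]
      have hrhs : (star V * X) j k = y j k := by
        rw [Matrix.star_eq_conjTranspose, Matrix.mul_apply]
        simp only [Matrix.conjTranspose_apply, star_trivial]
        have : y j k = ∑ i, Xᵀ k i * ⇑(b j) i := rfl
        rw [this]
        congr 1
        funext i
        rw [Matrix.transpose_apply, hVdef]
        rw [Matrix.IsHermitian.eigenvectorUnitary_apply]
        ring
      rw [hrhs]
      by_cases hj : lam j = 0
      · rw [hy0 j hj]
        simp [hWdef, hj]
      · exact hwy j hj k
    rw [hsqrt, Matrix.mul_assoc, Matrix.mul_assoc, ← Matrix.mul_assoc (star V), hV2,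
      Matrix.one_mul, ← Matrix.mul_assoc, Matrix.mul_assoc, hDW, ← Matrix.mul_assoc, hV1,
      Matrix.one_mul]

/-- If `X ∈ ℝ^{n×N}` (`N ≥ n`), `B` is an `n×n` positive semidefinite matrix and
`‖X Xᵀ − B‖ ≤ ε̃²` in spectral norm, then there exists `J ∈ ℝ^{n×N}` with `B = J Jᵀ` and
`‖J − X‖ ≤ 2 ε̃`. -/
theorem exists_sqrt_factor_close {n N : ℕ} (hnN : n ≤ N)
    (X : Matrix (Fin n) (Fin N) ℝ) (B : Matrix (Fin n) (Fin n) ℝ)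
    (hB : B.PosSemidef) (eps : ℝ) (heps : 0 ≤ eps)
    (hclose : sNorm (X * X.transpose - B) ≤ eps ^ 2) :
    ∃ J : Matrix (Fin n) (Fin N) ℝ, B = J * J.transpose ∧ sNorm (J - X) ≤ 2 * eps := by
  have hA : (X * Xᵀ).PosSemidef := by
    have h := Matrix.posSemidef_self_mul_conjTranspose X
    rwa [Matrix.conjTranspose_eq_transpose_of_trivial] at h
  obtain ⟨U, hU1, hU2⟩ := exists_polar hnN X hA
  set C : Matrix (Fin n) (Fin n) ℝ := hB.sqrt - hA.sqrt with hCdef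
  have hCherm : C.IsHermitian := hB.posSemidef_sqrt.1.sub hA.posSemidef_sqrt.1
  have hCt : Cᵀ = C := hCherm
  refine ⟨hB.sqrt * U, ?_, ?_⟩
  · have hst : (hB.sqrt)ᵀ = hB.sqrt := hB.posSemidef_sqrt.1
    calc B = hB.sqrt * hB.sqrt := hB.sqrt_mul_self.symm
      _ = hB.sqrt * (U * Uᵀ) * hB.sqrt := by rw [hU1, Matrix.mul_one]
      _ = (hB.sqrt * U) * (hB.sqrt * U)ᵀ := by
          rw [Matrix.transpose_mul, hst, Matrix.mul_assoc, Matrix.mul_assoc, Matrix.mul_assoc]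
  · have hJX : hB.sqrt * U - X = C * U := by
      rw [hCdef, Matrix.sub_mul, hU2]
    have hMt : (C * U)ᴴ = Uᵀ * C := by
      rw [Matrix.conjTranspose_eq_transpose_of_trivial, Matrix.transpose_mul, hCt]
    have hCC : (C * U) * (C * U)ᴴ = Cᴴ * C := by
      rw [hMt, Matrix.mul_assoc, ← Matrix.mul_assoc U, hU1, Matrix.one_mul,
        Matrix.conjTranspose_eq_transpose_of_trivial, hCt]
    have hnorm : ‖C * U‖ = ‖C‖ := by
      have h1 : ‖(C * U)ᴴᴴ * (C * U)ᴴ‖ = ‖(C * U)ᴴ‖ * ‖(C * U)ᴴ‖ :=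
        Matrix.l2_opNorm_conjTranspose_mul_self ((C * U)ᴴ)
      rw [Matrix.conjTranspose_conjTranspose, hCC, Matrix.l2_opNorm_conjTranspose] at h1
      have h2 : ‖Cᴴ * C‖ = ‖C‖ * ‖C‖ := Matrix.l2_opNorm_conjTranspose_mul_self C
      rw [h2] at h1
      calc ‖C * U‖ = Real.sqrt (‖C * U‖ * ‖C * U‖) := (Real.sqrt_mul_self (norm_nonneg _)).symm
        _ = Real.sqrt (‖C‖ * ‖C‖) := by rw [h1]
        _ = ‖C‖ := Real.sqrt_mul_self (norm_nonneg _)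
    have hCbound : ‖C‖ ≤ eps := by
      have h3 : ‖C‖ = ‖hA.sqrt - hB.sqrt‖ := by rw [hCdef, norm_sub_rev]
      have h4 : ‖hA.sqrt - hB.sqrt‖ ≤ Real.sqrt ‖X * Xᵀ - B‖ := sqrt_perturb hA hB
      have h5 : ‖X * Xᵀ - B‖ ≤ eps ^ 2 := by rw [← sNorm_eq_l2]; exact hclose
      calc ‖C‖ ≤ Real.sqrt ‖X * Xᵀ - B‖ := by rw [h3]; exact h4
        _ ≤ Real.sqrt (eps ^ 2) := Real.sqrt_le_sqrt h5
        _ = eps := by rw [Real.sqrt_sq heps]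
    rw [sNorm_eq_l2, hJX, hnorm]
    linarith
end
end
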